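/- The critical values δ_k are non-increasing in k: for all k ∈ {ℓ+1,...,n-1}, δ_k ≥ δ_{k+1}. -/

import Mathlib

open Finset

/-- The critical radii `δ_k` are non-increasing: `δ_{k+1} ≤ δ_k` for `ℓ < k`. -/
theorem chi2_delta_k_antitone
    (n : ℕ) (hn : 0 < n) (f p : Fin n → ℝ) (hf : Monotone f)
    (hp0 : ∀ i, 0 < p i) (hp1 : ∑ i, p i = 1)
    (ℓ : Fin n) (hℓ : f ℓ = f ⟨0, hn⟩)
    (hℓmax : ∀ i, f i = f ⟨0, hn⟩ → i ≤ ℓ)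
    (k k' : Fin n) (hk : ℓ < k) (hk' : (k' : ℕ) = (k : ℕ) + 1) :
    let m : Fin n → ℝ := fun j => ∑ i ∈ Finset.Iic j, p i
    let μ : Fin n → ℝ := fun j => (1 / m j) * ∑ i ∈ Finset.Iic j, p i * f i
    let σ2 : Fin n → ℝ :=
      fun j => (1 / m j) * ∑ i ∈ Finset.Iic j, p i * (f i - μ j) ^ 2
    let δc : Fin n → ℝ :=
      fun j => (1 / m j) * (σ2 j / (f j - μ j) ^ 2 + 1 - m j)
    δc k' ≤ δc k := by
  intro m μ σ2 δc
  set S : Fin n → ℝ := fun j => ∑ i ∈ Finset.Iic j, p i * f i with hSdef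
  set Q : Fin n → ℝ := fun j => ∑ i ∈ Finset.Iic j, p i * f i ^ 2 with hQdef
  have hm : ∀ j, 0 < m j := fun j =>
    Finset.sum_pos (fun i _ => hp0 i) ⟨j, Finset.mem_Iic.mpr le_rfl⟩
  -- key formula: δc j = B/A^2 - 1
  have key : ∀ j : Fin n, f j * m j - S j ≠ 0 →
      δc j = (f j ^ 2 * m j - 2 * f j * S j + Q j) / (f j * m j - S j) ^ 2 - 1 := by
    intro j hA
    have hmj := hm j
    have hμ : μ j = S j / m j := by
      show (1 / m j) * S j = S j / m j; ring
    have hσsum : ∑ i ∈ Finset.Iic j, p i * (f i - μ j) ^ 2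
        = Q j - 2 * μ j * S j + μ j ^ 2 * m j := by
      have hc : ∀ i ∈ Finset.Iic j, p i * (f i - μ j) ^ 2
          = p i * f i ^ 2 - 2 * μ j * (p i * f i) + μ j ^ 2 * p i := fun i _ => by ring
      rw [Finset.sum_congr rfl hc, Finset.sum_add_distrib, Finset.sum_sub_distrib,
        ← Finset.mul_sum, ← Finset.mul_sum]
    have hσ : σ2 j = (1 / m j) * (Q j - 2 * μ j * S j + μ j ^ 2 * m j) := by
      show (1 / m j) * ∑ i ∈ Finset.Iic j, p i * (f i - μ j) ^ 2 = _
      rw [hσsum]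
    show (1 / m j) * (σ2 j / (f j - μ j) ^ 2 + 1 - m j) = _
    rw [hσ, hμ]
    have hmne : m j ≠ 0 := hmj.ne'
    have alg : ∀ (m S Q f : ℝ), f * m - S ≠ 0 → m ≠ 0 →
        (1 / m) * ((1 / m) * (Q - 2 * (S / m) * S + (S / m) ^ 2 * m) / (f - S / m) ^ 2 + 1 - m)
          = (f ^ 2 * m - 2 * f * S + Q) / (f * m - S) ^ 2 - 1 := by
      intro m S Q f hA hmne
      have hd : f - S / m = (f * m - S) / m := by field_simp
      rw [hd]
      generalize hAe : f * m - S = A at *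
      obtain rfl : S = f * m - A := by linarith
      field_simp
      ring
    exact alg (m j) (S j) (Q j) (f j) hA hmne
  -- positivity of A at k
  have hkk' : k < k' := by rw [Fin.lt_def]; omega
  have hfk : f ⟨0, hn⟩ < f k := by
    refine lt_of_le_of_ne (hf (by simp [Fin.le_def])) (fun h => ?_)
    exact absurd (hℓmax k h.symm) (not_le.mpr hk)
  have hAsum : f k * m k - S k = ∑ i ∈ Finset.Iic k, p i * (f k - f i) := by
    show f k * (∑ i ∈ Finset.Iic k, p i) - ∑ i ∈ Finset.Iic k, p i * f i = _
    rw [Finset.mul_sum, ← Finset.sum_sub_distrib]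
    exact Finset.sum_congr rfl fun i _ => by ring
  have hA : 0 < f k * m k - S k := by
    rw [hAsum]
    refine Finset.sum_pos' (fun i hi => mul_nonneg (hp0 i).le
      (sub_nonneg.mpr (hf (Finset.mem_Iic.mp hi)))) ⟨⟨0, hn⟩, ?_, ?_⟩
    · simp [Fin.le_def]
    · exact mul_pos (hp0 _) (sub_pos.mpr hfk)
  have hfle : f k ≤ f k' := hf hkk'.le
  have hA' : f k * m k - S k ≤ f k' * m k - S k := by nlinarith [hm k]
  -- Cauchy-Schwarz : S k ^ 2 ≤ Q k * m k
  have hC : 0 ≤ Q k * m k - S k ^ 2 := by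
    have hcs := Finset.sum_mul_sq_le_sq_mul_sq (Finset.Iic k)
      (fun i => Real.sqrt (p i)) (fun i => Real.sqrt (p i) * f i)
    have h1 : ∑ i ∈ Finset.Iic k, Real.sqrt (p i) * (Real.sqrt (p i) * f i) = S k :=
      Finset.sum_congr rfl fun i _ => by
        rw [← mul_assoc, Real.mul_self_sqrt (hp0 i).le]
    have h2 : ∑ i ∈ Finset.Iic k, Real.sqrt (p i) ^ 2 = m k :=
      Finset.sum_congr rfl fun i _ => Real.sq_sqrt (hp0 i).le
    have h3 : ∑ i ∈ Finset.Iic k, (Real.sqrt (p i) * f i) ^ 2 = Q k :=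
      Finset.sum_congr rfl fun i _ => by
        rw [mul_pow, Real.sq_sqrt (hp0 i).le]
    rw [h1, h2, h3] at hcs
    nlinarith [hcs]
  -- relate sums at k' with sums at k
  have hknot : k' ∉ Finset.Iic k := by
    simp only [Finset.mem_Iic, Fin.le_def]; omega
  have hins : Finset.Iic k' = insert k' (Finset.Iic k) := by
    ext i
    simp only [Finset.mem_Iic, Finset.mem_insert, Fin.le_def, Fin.ext_iff]
    omega
  have hm' : m k' = p k' + m k := by
    show ∑ i ∈ Finset.Iic k', p i = _
    rw [hins, Finset.sum_insert hknot]
  have hS' : S k' = p k' * f k' + S k := by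
    show ∑ i ∈ Finset.Iic k', p i * f i = _
    rw [hins, Finset.sum_insert hknot]
  have hQ' : Q k' = p k' * f k' ^ 2 + Q k := by
    show ∑ i ∈ Finset.Iic k', p i * f i ^ 2 = _
    rw [hins, Finset.sum_insert hknot]
  have hAk' : f k' * m k' - S k' = f k' * m k - S k := by rw [hm', hS']; ring
  have hBk' : f k' ^ 2 * m k' - 2 * f k' * S k' + Q k'
      = f k' ^ 2 * m k - 2 * f k' * S k + Q k := by rw [hm', hS', hQ']; ring
  have hA'pos : 0 < f k' * m k - S k := lt_of_lt_of_le hA hA'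
  rw [key k hA.ne', key k' (by rw [hAk']; exact hA'pos.ne')]
  rw [hAk', hBk']
  set A1 := f k * m k - S k
  set A2 := f k' * m k - S k
  set B1 := f k ^ 2 * m k - 2 * f k * S k + Q k
  set B2 := f k' ^ 2 * m k - 2 * f k' * S k + Q k
  have e1 : B1 * m k = A1 ^ 2 + (Q k * m k - S k ^ 2) := by simp only [A1, B1]; ring
  have e2 : B2 * m k = A2 ^ 2 + (Q k * m k - S k ^ 2) := by simp only [A2, B2]; ring
  have hdiff : (0:ℝ) ≤ A2 ^ 2 - A1 ^ 2 := by nlinarith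
  have h4 : B1 * A2 ^ 2 * m k - B2 * A1 ^ 2 * m k
      = (Q k * m k - S k ^ 2) * (A2 ^ 2 - A1 ^ 2) := by
    linear_combination A2 ^ 2 * e1 - A1 ^ 2 * e2
  have hgoal : B2 * A1 ^ 2 ≤ B1 * A2 ^ 2 := by
    nlinarith [h4, mul_nonneg hC hdiff, hm k]
  have h5 : B2 / A2 ^ 2 ≤ B1 / A1 ^ 2 := by
    rw [div_le_div_iff₀ (by positivity) (by positivity)]
    exact hgoal
  linarith
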